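/- Let ψ: O_q(G(k,n)) → O_q(G(n−k,n)) be the isomorphism with ψ([I]) = [w_0(Î)] for every quantum Plücker coordinate [I], where Î := {1,…,n}∖I and w_0 is the longest element of the symmetric group S_n (so w_0(i) = n+1−i). Then for each i = 1,…,n, as derivations of O_q(G(n−k,n)): ψ ∘ D_i ∘ ψ^{−1} = (1/(n−k))·(Σ_{j=1}^n D̄_j) − D̄_{w_0(i)}. -/

import Mathlib

noncomputable section

open scoped BigOperators

/-- Defining relations of the algebra of `m × n` quantum matrices. -/
inductive QMatRel (K : Type*) [Field K] (q : K) (m n : ℕ) :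
    FreeAlgebra K (Fin m × Fin n) → FreeAlgebra K (Fin m × Fin n) → Prop
  | row : ∀ (i : Fin m) (j l : Fin n), j < l →
      QMatRel K q m n (FreeAlgebra.ι K (i, j) * FreeAlgebra.ι K (i, l))
        (q • (FreeAlgebra.ι K (i, l) * FreeAlgebra.ι K (i, j)))
  | col : ∀ (i k : Fin m) (j : Fin n), i < k →
      QMatRel K q m n (FreeAlgebra.ι K (i, j) * FreeAlgebra.ι K (k, j))
        (q • (FreeAlgebra.ι K (k, j) * FreeAlgebra.ι K (i, j)))
  | commute : ∀ (i k : Fin m) (j l : Fin n), k < i → j < l →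
      QMatRel K q m n (FreeAlgebra.ι K (i, j) * FreeAlgebra.ι K (k, l))
        (FreeAlgebra.ι K (k, l) * FreeAlgebra.ι K (i, j))
  | quantum : ∀ (i k : Fin m) (j l : Fin n), i < k → j < l →
      QMatRel K q m n (FreeAlgebra.ι K (i, j) * FreeAlgebra.ι K (k, l))
        (FreeAlgebra.ι K (k, l) * FreeAlgebra.ι K (i, j)
          + (q - q⁻¹) • (FreeAlgebra.ι K (i, l) * FreeAlgebra.ι K (k, j)))

/-- The algebra `O_q(M(m,n))` of `m × n` quantum matrices. -/
abbrev QMat (K : Type*) [Field K] (q : K) (m n : ℕ) : Type _ :=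
  RingQuot (QMatRel K q m n)

variable {K : Type*} [Field K]

/-- The generator `x_{ij}` of `O_q(M(m,n))`. -/
def qmX (q : K) {m n : ℕ} (i : Fin m) (j : Fin n) : QMat K q m n :=
  RingQuot.mkAlgHom K (QMatRel K q m n) (FreeAlgebra.ι K (i, j))

/-- The number of inversions (the length) of a permutation of `Fin t`. -/
def invCount {t : ℕ} (σ : Equiv.Perm (Fin t)) : ℕ :=
  (Finset.univ.filter fun p : Fin t × Fin t => p.1 < p.2 ∧ σ p.2 < σ p.1).card

/-- The quantum minor, on rows `I` and columns `J`, of a matrix `x` of elements of an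
arbitrary algebra: `Σ_σ (-q)^{ℓ(σ)} x_{i₁ j_{σ(1)}} ⋯ x_{i_t j_{σ(t)}}`. -/
def minorOf (q : K) {A : Type*} [Ring A] [Algebra K A] {m n t : ℕ}
    (x : Fin m → Fin n → A) (I : Finset (Fin m)) (J : Finset (Fin n))
    (hI : I.card = t) (hJ : J.card = t) : A :=
  ∑ σ : Equiv.Perm (Fin t),
    ((-q) ^ invCount σ) •
      (List.ofFn fun r : Fin t =>
        x (I.orderEmbOfFin hI r) (J.orderEmbOfFin hJ (σ r))).prod

/-- The quantum minor `[I|J]` of `O_q(M(m,n))`. -/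
def qMinor (q : K) {m n t : ℕ} (I : Finset (Fin m)) (J : Finset (Fin n))
    (hI : I.card = t) (hJ : J.card = t) : QMat K q m n :=
  minorOf q (qmX q) I J hI hJ

/-- The quantum grassmannian `O_q(G(k,n))`: the subalgebra of `O_q(M(k,n))` generated by the
`k × k` quantum minors (the quantum Plücker coordinates). -/
def qGrass (q : K) (k n : ℕ) : Subalgebra K (QMat K q k n) :=
  Algebra.adjoin K
    {x | ∃ (J : Finset (Fin n)) (hJ : J.card = k),
      x = qMinor q (Finset.univ : Finset (Fin k)) J (Finset.card_fin k) hJ}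

/-- The quantum Plücker coordinate `[J]`, as an element of `O_q(G(k,n))`. -/
def pluck (q : K) {k n : ℕ} (J : Finset (Fin n)) (hJ : J.card = k) : qGrass q k n :=
  ⟨qMinor q Finset.univ J (Finset.card_fin k) hJ, Algebra.subset_adjoin ⟨J, hJ, rfl⟩⟩

/-- A `K`-linear map is a derivation if it satisfies the Leibniz rule. -/
def IsDeriv {A : Type*} [Ring A] [Algebra K A] (D : A →ₗ[K] A) : Prop :=
  ∀ a b : A, D (a * b) = a * D b + D a * b

/-- The index set `{1, …, k}` (`0`-based: `{0, …, k-1}`) inside `{1, …, n}`. -/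
def uSet (k n : ℕ) (h : k ≤ n) : Finset (Fin n) :=
  Finset.image (Fin.castLE h) Finset.univ

lemma uSet_card (k n : ℕ) (h : k ≤ n) : (uSet k n h).card = k := by
  rw [uSet, Finset.card_image_of_injective _ (Fin.castLE_injective h)]
  exact Finset.card_fin k

/-- The index set `{n-k+1, …, n}` (`0`-based: `{n-k, …, n-1}`). -/
def wSet (k n : ℕ) (h : k ≤ n) : Finset (Fin n) :=
  Finset.image (fun r : Fin k => (⟨n - k + (r : ℕ), by have := r.isLt; omega⟩ : Fin n))
    Finset.univ

lemma wSet_card (k n : ℕ) (h : k ≤ n) : (wSet k n h).card = k := by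
  rw [wSet, Finset.card_image_of_injective]
  · exact Finset.card_fin k
  · intro a b hab
    have h' := congrArg Fin.val hab
    simp only [] at h'
    exact Fin.val_injective (by omega)

/-- The leftmost quantum Plücker coordinate `[u] = [1,…,k]`. -/
def pluckU (q : K) (k n : ℕ) (h : k ≤ n) : qGrass q k n :=
  pluck q (uSet k n h) (uSet_card k n h)

/-- The rightmost quantum Plücker coordinate `[w] = [n-k+1,…,n]`. -/
def pluckW (q : K) (k n : ℕ) (h : k ≤ n) : qGrass q k n :=
  pluck q (wSet k n h) (wSet_card k n h)

/-- The index type for quantum Plücker coordinates: `k`-element subsets of `{1,…,n}`. -/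
abbrev PluckIdx (k n : ℕ) : Type _ := {J : Finset (Fin n) // J.card = k}

/-- The standard partial order on quantum Plücker coordinates:
`[i₁<…<i_k] ≤ [j₁<…<j_k]` iff `i_l ≤ j_l` for all `l`. -/
def stdLE {k n : ℕ} (A B : PluckIdx k n) : Prop :=
  ∀ r : Fin k, A.1.orderEmbOfFin A.2 r ≤ B.1.orderEmbOfFin B.2 r

/-- The standard strict order on quantum Plücker coordinates. -/
def stdLT {k n : ℕ} (A B : PluckIdx k n) : Prop :=
  stdLE A B ∧ A ≠ B

/-- A list of Plücker indices is standard if it is nondecreasing in the standard order. -/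
def isStd {k n : ℕ} (L : List (PluckIdx k n)) : Prop :=
  L.Chain' stdLE

/-- The monomial in the quantum Plücker coordinates given by a list of indices. -/
def monOf (q : K) {k n : ℕ} (L : List (PluckIdx k n)) : qGrass q k n :=
  (L.map fun J => pluck q J.1 J.2).prod

/-- The degree-`d` homogeneous component of `O_q(G(k,n))`: the span of the products of `d`
quantum Plücker coordinates. -/
def grassDeg (q : K) (k n d : ℕ) : Submodule K (qGrass q k n) :=
  Submodule.span K {x | ∃ L : List (PluckIdx k n), L.length = d ∧ x = monOf q L}

/-- `d(I) = #(I \ (I ∩ u))`. -/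
def dCols {k n : ℕ} (h : k ≤ n) (J : PluckIdx k n) : ℕ := (J.1 \ uSet k n h).card

/-- `[u]` as a Plücker index. -/
def uElt (k n : ℕ) (h : k ≤ n) : PluckIdx k n := ⟨uSet k n h, uSet_card k n h⟩

/-- `[w]` as a Plücker index. -/
def wElt (k n : ℕ) (h : k ≤ n) : PluckIdx k n := ⟨wSet k n h, wSet_card k n h⟩

/-- The `K`-module of `K`-linear derivations of `A`. -/
def DerSub (K : Type*) [Field K] (A : Type*) [Ring A] [Algebra K A] :
    Submodule K (A →ₗ[K] A) where
  carrier := {D | IsDeriv D}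
  zero_mem' := by intro a b; simp
  add_mem' := by
    intro D E hD hE a b
    simp only [LinearMap.add_apply, hD a b, hE a b, mul_add, add_mul]
    abel
  smul_mem' := by
    intro c D hD a b
    simp only [LinearMap.smul_apply, hD a b, smul_add, mul_smul_comm, smul_mul_assoc]

/-- The submodule of inner derivations `ad_z : a ↦ za - az` inside the module of
derivations of `A`. -/
def InnDerSub (K : Type*) [Field K] (A : Type*) [Ring A] [Algebra K A] :
    Submodule K (DerSub K A) where
  carrier := {D | ∃ z : A, ∀ x : A, (D : A →ₗ[K] A) x = z * x - x * z}
  zero_mem' := ⟨0, by simp⟩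
  add_mem' := by
    rintro D E ⟨y, hy⟩ ⟨z, hz⟩
    refine ⟨y + z, fun x => ?_⟩
    simp only [Submodule.coe_add, LinearMap.add_apply, hy x, hz x, add_mul, mul_add]
    abel
  smul_mem' := by
    rintro c D ⟨z, hz⟩
    refine ⟨c • z, fun x => ?_⟩
    simp only [Submodule.coe_smul, LinearMap.smul_apply, hz x, smul_sub, smul_mul_assoc,
      mul_smul_comm]

lemma qgDerivOne {A : Type*} [Ring A] [Algebra K A] {D : A →ₗ[K] A} (hD : IsDeriv D) :
    D 1 = 0 := by
  have := hD 1 1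
  simp only [mul_one, one_mul] at this
  -- this : D 1 = D 1 + D 1
  have h2 : D 1 + D 1 = D 1 + 0 := by rw [add_zero]; exact this.symm
  exact (add_left_cancel h2)

lemma qgDerivAlgebraMap {A : Type*} [Ring A] [Algebra K A] {D : A →ₗ[K] A} (hD : IsDeriv D)
    (c : K) : D (algebraMap K A c) = 0 := by
  rw [Algebra.algebraMap_eq_smul_one, map_smul, qgDerivOne hD, smul_zero]

lemma pluck_congr (q : K) {k n : ℕ} {A B : Finset (Fin n)} (h : A = B)
    (hA : A.card = k) (hB : B.card = k) : pluck q A hA = pluck q B hB := by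
  subst h; rfl

set_option maxHeartbeats 2000000 in
set_option synthInstance.maxHeartbeats 1000000 in
/-- Let `ψ : O_q(G(k,n)) → O_q(G(n-k,n))` be the isomorphism with
`ψ([I]) = [w₀(Î)]`, where `Î` is the complement of `I` and `w₀(i) = n+1-i` is the longest
element of `S_n` (in `0`-based indexing, `Fin.rev`). Then for each `i`, as derivations of
`O_q(G(n-k,n))`: `ψ ∘ D_i ∘ ψ⁻¹ = (1/(n-k))·(Σ_{j=1}^n D̄_j) - D̄_{w₀(i)}`. -/
theorem stmt_5 (K : Type*) [Field K] [CharZero K] (q : K) (hq0 : q ≠ 0)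
    (hq : ∀ t : ℕ, t ≠ 0 → q ^ t ≠ 1)
    (k n : ℕ) (hk : 2 ≤ k) (hkn : k + 2 ≤ n)
    (ψ : qGrass q k n ≃ₐ[K] qGrass q (n - k) n)
    (hψ : ∀ (I : Finset (Fin n)) (hI : I.card = k)
        (hIc : (Finset.image Fin.rev Iᶜ).card = n - k),
      ψ (pluck q I hI) = pluck q (Finset.image Fin.rev Iᶜ) hIc)
    (D : Fin n → (qGrass q k n →ₗ[K] qGrass q k n))
    (hDder : ∀ i, IsDeriv (K := K) (A := qGrass q k n) (D i))
    (hD : ∀ (i : Fin n) (J : Finset (Fin n)) (hJ : J.card = k),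
      D i (pluck q J hJ) = if i ∈ J then pluck q J hJ else 0)
    (Dbar : Fin n → (qGrass q (n - k) n →ₗ[K] qGrass q (n - k) n))
    (hDbarder : ∀ j, IsDeriv (K := K) (A := qGrass q (n - k) n) (Dbar j))
    (hDbar : ∀ (j : Fin n) (J : Finset (Fin n)) (hJ : J.card = n - k),
      Dbar j (pluck q J hJ) = if j ∈ J then pluck q J hJ else 0) :
    ∀ (i : Fin n) (x : qGrass q (n - k) n),
      ψ (D i (ψ.symm x)) =
        (((n - k : ℕ) : K))⁻¹ • (∑ j, Dbar j x) - Dbar (Fin.rev i) x := by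
  intro i x
  classical
  have hnk0 : n - k ≠ 0 := by omega
  have hcne : ((n - k : ℕ) : K) ≠ 0 := Nat.cast_ne_zero.mpr hnk0
  have hy : ∀ y : qGrass q (n - k) n, y ∈ Algebra.adjoin K
      (((↑) : qGrass q (n - k) n → QMat K q (n - k) n) ⁻¹'
        {x | ∃ (J : Finset (Fin n)) (hJ : J.card = n - k),
          x = qMinor q (Finset.univ : Finset (Fin (n - k))) J
            (Finset.card_fin (n - k)) hJ}) := by
    intro y
    exact Algebra.eq_top_iff.mp Algebra.adjoin_adjoin_coe_preimage y
  induction hy x using Algebra.adjoin_induction with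
  | mem y hy =>
    obtain ⟨J, hJ, hJy⟩ := hy
    have hyeq : y = pluck q J hJ := Subtype.ext hJy
    subst hyeq
    -- compute the right side
    have hsum : ∑ j, Dbar j (pluck q J hJ) = (n - k) • pluck q J hJ := by
      simp only [hDbar]
      rw [Finset.sum_ite_mem, Finset.univ_inter, Finset.sum_const, hJ]
    have hRval : (((n - k : ℕ) : K))⁻¹ • (∑ j, Dbar j (pluck q J hJ))
        - Dbar (Fin.rev i) (pluck q J hJ) =
        pluck q J hJ - (if Fin.rev i ∈ J then pluck q J hJ else 0) := by
      rw [hsum, hDbar, ← Nat.cast_smul_eq_nsmul K, smul_smul,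
        inv_mul_cancel₀ hcne, one_smul]
    -- compute the left side
    set I : Finset (Fin n) := (Finset.image Fin.rev J)ᶜ with hIdef
    have hcardim : (Finset.image Fin.rev J).card = n - k := by
      rw [Finset.card_image_of_injective _ Fin.rev_injective, hJ]
    have hI : I.card = k := by
      rw [hIdef, Finset.card_compl, hcardim, Fintype.card_fin]
      omega
    have hIc0 : Finset.image Fin.rev Iᶜ = J := by
      rw [hIdef, compl_compl, Finset.image_image]
      ext a
      simp [Fin.rev_rev]
    have hIc : (Finset.image Fin.rev Iᶜ).card = n - k := by rw [hIc0, hJ]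
    have hpsi : ψ (pluck q I hI) = pluck q J hJ := by
      rw [hψ I hI hIc]; exact pluck_congr q hIc0 hIc hJ
    have hsymm : ψ.symm (pluck q J hJ) = pluck q I hI := by
      rw [← hpsi, AlgEquiv.symm_apply_apply]
    have hmem : i ∈ I ↔ Fin.rev i ∉ J := by
      rw [hIdef, Finset.mem_compl, Finset.mem_image, not_iff_not]
      constructor
      · rintro ⟨a, ha, rfl⟩; rwa [Fin.rev_rev]
      · intro h; exact ⟨Fin.rev i, h, Fin.rev_rev i⟩
    rw [hsymm, hD, hRval]
    by_cases hri : Fin.rev i ∈ J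
    · rw [if_neg (fun hiI => (hmem.mp hiI) hri), if_pos hri, map_zero]
      exact Subtype.ext (by simp)
    · rw [if_pos (hmem.mpr hri), if_neg hri, hpsi]
      exact Subtype.ext (by simp)
  | algebraMap c =>
    have h1 : ψ.symm (algebraMap K (qGrass q (n - k) n) c) =
        algebraMap K (qGrass q k n) c := ψ.symm.commutes c
    rw [h1, qgDerivAlgebraMap (hDder i), map_zero]
    have hzero : ∀ j : Fin n, Dbar j (algebraMap K (qGrass q (n - k) n) c) = 0 :=
      fun j => qgDerivAlgebraMap (hDbarder j) c
    simp only [hzero, Finset.sum_const_zero, smul_zero]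
    exact Subtype.ext (by simp)
  | add a b ha hb iha ihb =>
    simp only [map_add, Finset.sum_add_distrib, smul_add, iha, ihb]
    abel
  | mul a b ha hb iha ihb =>
    rw [map_mul, hDder i, map_add, map_mul, map_mul, AlgEquiv.apply_symm_apply,
      AlgEquiv.apply_symm_apply, iha, ihb]
    have hmulbar : ∀ (j : Fin n) (u v : qGrass q (n - k) n),
        Dbar j (u * v) = u * Dbar j v + Dbar j u * v := fun j => hDbarder j
    simp only [hmulbar, Finset.sum_add_distrib, smul_add,
      Finset.mul_sum, Finset.sum_mul, mul_sub, sub_mul, mul_add, add_mul,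
      mul_smul_comm, smul_mul_assoc]
    apply Subtype.ext
    simp only [MulMemClass.coe_mul, AddMemClass.coe_add, AddSubgroupClass.coe_sub,
      SetLike.val_smul, AddSubmonoidClass.coe_finset_sum]
    simp only [mul_sub, sub_mul, Finset.mul_sum, Finset.sum_mul, mul_smul_comm,
      smul_mul_assoc, mul_add, add_mul, smul_add]
    abel
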